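/- If W is a finite Coxeter group with longest element w₀, then for every w ∈ W the polynomial N_{w,w₀,w₀} has degree exactly l(w). -/

import Mathlib

open Polynomial

/-- The structure constants of the Iwahori–Hecke algebra: `heckeN T w w' w''` is the
coefficient of `T w''` in `T w * T w'`. -/
noncomputable def heckeN {W H : Type*} [Group W] [Ring H] [Algebra (Polynomial ℤ) H]
    (T : Module.Basis W (Polynomial ℤ) H) (w w' w'' : W) : Polynomial ℤ :=
  T.repr (T w * T w') w''

variable {B W H : Type*} [Group W] {M : CoxeterMatrix B}


section Aux
variable (cs : CoxeterSystem M W) [Ring H] [Algebra (Polynomial ℤ) H]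
  (T : Module.Basis W (Polynomial ℤ) H)

lemma hecke_ascent
    (hmul : ∀ y y' : W, cs.length (y * y') = cs.length y + cs.length y' →
      T y * T y' = T (y * y'))
    {i : B} {u : W} (h : ¬ cs.IsLeftDescent u i) :
    T (cs.simple i) * T u = T (cs.simple i * u) := by
  apply hmul
  rw [cs.not_isLeftDescent_iff] at h
  rw [h, cs.length_simple]
  omega

lemma hecke_sq
    (hquad : ∀ i : B, (T (cs.simple i) + 1) *
      (T (cs.simple i) - algebraMap (Polynomial ℤ) H X) = 0)
    (i : B) :
    T (cs.simple i) * T (cs.simple i)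
      = algebraMap (Polynomial ℤ) H X * T (cs.simple i)
        - T (cs.simple i) + algebraMap (Polynomial ℤ) H X := by
  have h := hquad i
  set a := T (cs.simple i) with ha
  set q := algebraMap (Polynomial ℤ) H X with hq
  have hc : a * q = q * a := (Algebra.commutes X a).symm
  rw [add_mul, mul_sub, one_mul, hc] at h
  rw [← sub_eq_zero, ← h]
  abel

lemma hecke_descent
    (hmul : ∀ y y' : W, cs.length (y * y') = cs.length y + cs.length y' →
      T y * T y' = T (y * y'))
    (hquad : ∀ i : B, (T (cs.simple i) + 1) *
      (T (cs.simple i) - algebraMap (Polynomial ℤ) H X) = 0)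
    {i : B} {u : W} (h : cs.IsLeftDescent u i) :
    T (cs.simple i) * T u
      = ((X:Polynomial ℤ) - 1) • T u + (X:Polynomial ℤ) • T (cs.simple i * u) := by
  have hlen : cs.length (cs.simple i * u) + 1 = cs.length u := cs.isLeftDescent_iff.mp h
  have hv : ¬ cs.IsLeftDescent (cs.simple i * u) i := by
    rw [cs.not_isLeftDescent_iff, cs.simple_mul_simple_cancel_left]
    omega
  have hTu : T (cs.simple i) * T (cs.simple i * u) = T u := by
    rw [hecke_ascent cs T hmul hv, cs.simple_mul_simple_cancel_left]
  calc T (cs.simple i) * T u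
      = (T (cs.simple i) * T (cs.simple i)) * T (cs.simple i * u) := by
        rw [mul_assoc, hTu]
    _ = ((X:Polynomial ℤ) - 1) • T u + (X:Polynomial ℤ) • T (cs.simple i * u) := by
        rw [hecke_sq cs T hquad i]
        rw [sub_smul, one_smul, Algebra.smul_def, Algebra.smul_def]
        rw [add_mul, sub_mul, mul_assoc, hTu]

lemma hecke_repr_mul (i : B) (x : H) (u : W) :
    T.repr (T (cs.simple i) * x) u
      = (T.repr x).sum fun v c => c * T.repr (T (cs.simple i) * T v) u := by
  conv_lhs => rw [← T.linearCombination_repr x]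
  rw [Finsupp.linearCombination_apply, Finsupp.mul_sum]
  simp only [mul_smul_comm]
  rw [map_finsuppSum, Finsupp.sum_apply]
  simp only [map_smul, Finsupp.smul_apply, smul_eq_mul]

end Aux


section Aux2
variable (cs : CoxeterSystem M W) [Ring H] [Algebra (Polynomial ℤ) H]
  (T : Module.Basis W (Polynomial ℤ) H)
  (hmul : ∀ y y' : W, cs.length (y * y') = cs.length y + cs.length y' →
      T y * T y' = T (y * y'))
  (hquad : ∀ i : B, (T (cs.simple i) + 1) *
      (T (cs.simple i) - algebraMap (Polynomial ℤ) H X) = 0)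

include hmul hquad

lemma hecke_repr_deg_le_one (i : B) (v u : W) :
    (T.repr (T (cs.simple i) * T v) u).degree ≤ 1 := by
  classical
  by_cases hd : cs.IsLeftDescent v i
  · rw [hecke_descent cs T hmul hquad hd]
    simp only [map_add, map_smul, Module.Basis.repr_self, Finsupp.add_apply, Finsupp.smul_apply,
      smul_eq_mul, Finsupp.single_apply]
    split_ifs <;> simp only [mul_one, mul_zero, add_zero, zero_add] <;> compute_degree <;> norm_num
  · rw [hecke_ascent cs T hmul hd]
    simp only [Module.Basis.repr_self, Finsupp.single_apply]
    split_ifs <;> simp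

open Classical in
lemma hecke_repr_val_w0 (w₀ : W) (hw₀ : ∀ u : W, cs.length u ≤ cs.length w₀)
    (i : B) (v : W) :
    T.repr (T (cs.simple i) * T v) w₀
      = if v = w₀ then (X : Polynomial ℤ) - 1
        else if v = cs.simple i * w₀ then 1 else 0 := by
  classical
  have hdw₀ : cs.IsLeftDescent w₀ i := by
    have h1 := hw₀ (cs.simple i * w₀)
    have h2 := cs.length_simple_mul_ne w₀ i
    exact lt_of_le_of_ne h1 h2
  have hne : cs.simple i * w₀ ≠ w₀ := by
    intro h
    exact cs.length_simple_mul_ne w₀ i (by rw [h])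
  by_cases h1 : v = w₀
  · subst h1
    rw [hecke_descent cs T hmul hquad hdw₀]
    simp [Finsupp.single_apply, hne, if_pos rfl]
  · rw [if_neg h1]
    by_cases h2 : v = cs.simple i * w₀
    · subst h2
      have : ¬ cs.IsLeftDescent (cs.simple i * w₀) i := by
        have h4 := cs.isLeftDescent_iff.mp hdw₀
        rw [cs.not_isLeftDescent_iff, cs.simple_mul_simple_cancel_left]
        omega
      rw [hecke_ascent cs T hmul this, cs.simple_mul_simple_cancel_left]
      simp
    · rw [if_neg h2]
      by_cases hd : cs.IsLeftDescent v i
      · rw [hecke_descent cs T hmul hquad hd]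
        have h3 : cs.simple i * v ≠ w₀ := by
          intro h
          exact h2 (by rw [← h, cs.simple_mul_simple_cancel_left])
        simp [Finsupp.single_apply, h1, h3]
      · rw [hecke_ascent cs T hmul hd]
        have h3 : cs.simple i * v ≠ w₀ := by
          intro h
          exact h2 (by rw [← h, cs.simple_mul_simple_cancel_left])
        simp [Finsupp.single_apply, h3]

end Aux2

/-- In a finite Coxeter group with longest element `w₀`, the polynomial `N_{w,w₀,w₀}`
has degree exactly `l(w)`. -/
theorem stmt_2 [Fintype W] (cs : CoxeterSystem M W)
    [Ring H] [Algebra (Polynomial ℤ) H] (T : Module.Basis W (Polynomial ℤ) H)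
    (hone : T 1 = 1)
    (hmul : ∀ y y' : W, cs.length (y * y') = cs.length y + cs.length y' →
      T y * T y' = T (y * y'))
    (hquad : ∀ i : B, (T (cs.simple i) + 1) *
      (T (cs.simple i) - algebraMap (Polynomial ℤ) H X) = 0)
    (w₀ : W) (hw₀ : ∀ u : W, cs.length u ≤ cs.length w₀)
    (w : W) :
    (heckeN T w w₀ w₀).degree = (cs.length w : WithBot ℕ) := by
  classical
  have key : ∀ n : ℕ, ∀ w : W, cs.length w = n →
      (∀ u : W, (heckeN T w w₀ u).degree ≤ (cs.length w : WithBot ℕ)) ∧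
      (heckeN T w w₀ w₀).degree = (cs.length w : WithBot ℕ) := by
    intro n
    induction n using Nat.strong_induction_on with
    | _ n ih =>
      intro w hwn
      by_cases hw1 : w = 1
      · subst hw1
        have hN : ∀ u, heckeN T 1 w₀ u = Finsupp.single w₀ (1 : Polynomial ℤ) u := by
          intro u
          unfold heckeN
          rw [hone, one_mul, Module.Basis.repr_self]
        constructor
        · intro u
          rw [hN u, cs.length_one, Finsupp.single_apply]
          split_ifs <;> simp
        · rw [hN w₀, cs.length_one, Finsupp.single_apply, if_pos rfl]
          simp
      · obtain ⟨i, hi⟩ := cs.exists_leftDescent_of_ne_one hw1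
        set w' := cs.simple i * w with hw'
        have hlen : cs.length w' + 1 = cs.length w := cs.isLeftDescent_iff.mp hi
        have hww' : cs.simple i * w' = w := cs.simple_mul_simple_cancel_left i
        have hnd : ¬ cs.IsLeftDescent w' i := by
          rw [cs.not_isLeftDescent_iff, hww']
          omega
        have hTmul : T w * T w₀ = T (cs.simple i) * (T w' * T w₀) := by
          rw [← mul_assoc, hecke_ascent cs T hmul hnd, hww']
        have hrec : ∀ u, heckeN T w w₀ u
            = (T.repr (T w' * T w₀)).sum
              fun v c => c * T.repr (T (cs.simple i) * T v) u := by
          intro u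
          unfold heckeN
          rw [hTmul, hecke_repr_mul]
        have ih' := ih (cs.length w') (by omega) w' rfl
        have hcast : (cs.length w : WithBot ℕ) = (cs.length w' : WithBot ℕ) + 1 := by
          rw [← hlen]
          push_cast
          ring
        refine ⟨fun u => ?_, ?_⟩
        · rw [hrec u, Finsupp.sum]
          refine le_trans (Polynomial.degree_sum_le _ _) ?_
          rw [Finset.sup_le_iff]
          intro v hv
          refine le_trans (Polynomial.degree_mul_le _ _) ?_
          rw [hcast]
          exact add_le_add (ih'.1 v) (hecke_repr_deg_le_one cs T hmul hquad i v u)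
        · have hne : cs.simple i * w₀ ≠ w₀ := fun h => cs.length_simple_mul_ne w₀ i (by rw [h])
          have hval : heckeN T w w₀ w₀
              = heckeN T w' w₀ w₀ * ((X : Polynomial ℤ) - 1)
                + heckeN T w' w₀ (cs.simple i * w₀) := by
            rw [hrec w₀]
            have hfun : ∀ v c, c * T.repr (T (cs.simple i) * T v) w₀
                = (if v = w₀ then c * ((X : Polynomial ℤ) - 1) else 0)
                  + (if v = cs.simple i * w₀ then c else 0) := by
              intro v c
              rw [hecke_repr_val_w0 cs T hmul hquad w₀ hw₀ i v]
              by_cases h1 : v = w₀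
              · subst h1
                rw [if_pos rfl, if_pos rfl, if_neg (fun h => hne h.symm), add_zero]
              · rw [if_neg h1, if_neg h1, zero_add]
                by_cases h2 : v = cs.simple i * w₀
                · rw [if_pos h2, if_pos h2, mul_one]
                · rw [if_neg h2, if_neg h2, mul_zero]
            simp only [hfun]
            rw [Finsupp.sum_add, Finsupp.sum_ite_eq', Finsupp.sum_ite_eq']
            congr 1
            · split_ifs with h
              · rfl
              · unfold heckeN
                rw [Finsupp.notMem_support_iff.mp h, zero_mul]
            · split_ifs with h
              · rfl
              · unfold heckeN
                rw [Finsupp.notMem_support_iff.mp h]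
          rw [hval]
          have hdeg1 : (heckeN T w' w₀ w₀ * ((X : Polynomial ℤ) - 1)).degree
              = (cs.length w : WithBot ℕ) := by
            rw [Polynomial.degree_mul, ih'.2]
            have : ((X : Polynomial ℤ) - 1).degree = 1 := by
              simpa using Polynomial.degree_X_sub_C (1 : ℤ)
            rw [this, hcast]
          rw [← hdeg1]
          apply Polynomial.degree_add_eq_left_of_degree_lt
          rw [hdeg1, hcast]
          calc (heckeN T w' w₀ (cs.simple i * w₀)).degree
              ≤ (cs.length w' : WithBot ℕ) := ih'.1 _
            _ < (cs.length w' : WithBot ℕ) + 1 := by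
                exact_mod_cast WithBot.coe_lt_coe.mpr (Nat.lt_succ_self _)
  exact (key _ w rfl).2
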